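/- For all CO problems P and Q, if P ≡^s Q then P ≡_g Q. -/

import Mathlib

open scoped Classical

/-- Propositional formulas over a universe `U` of atoms, built from atoms,
`⊥`, conjunction, disjunction and implication. -/
inductive Formula (U : Type) : Type where
  | atom : U → Formula U
  | bot  : Formula U
  | conj : Formula U → Formula U → Formula U
  | disj : Formula U → Formula U → Formula U
  | imp  : Formula U → Formula U → Formula U

variable {U : Type}

/-- Classical satisfaction `I ⊨ φ`. -/
def Sat (I : Set U) : Formula U → Prop
  | .atom a => a ∈ I
  | .bot => False
  | .conj φ ψ => Sat I φ ∧ Sat I ψ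
  | .disj φ ψ => Sat I φ ∨ Sat I ψ
  | .imp φ ψ => Sat I φ → Sat I ψ

/-- Classical satisfaction of a theory. -/
def SatTheory (I : Set U) (T : Set (Formula U)) : Prop := ∀ φ ∈ T, Sat I φ

/-- `Mod T`: the classical models of a theory `T`. -/
def models (T : Set (Formula U)) : Set (Set U) := {I | SatTheory I T}

/-- HT-satisfaction `⟨I, J⟩ ⊨_HT φ` (for `I ⊆ J`). -/
def SatHT (I J : Set U) : Formula U → Prop
  | .atom a => a ∈ I
  | .bot => False
  | .conj φ ψ => SatHT I J φ ∧ SatHT I J ψ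
  | .disj φ ψ => SatHT I J φ ∨ SatHT I J ψ
  | .imp φ ψ => Sat J (Formula.imp φ ψ) ∧ (¬ SatHT I J φ ∨ SatHT I J ψ)

/-- HT-satisfaction of a theory. -/
def SatHTTheory (I J : Set U) (T : Set (Formula U)) : Prop := ∀ φ ∈ T, SatHT I J φ

/-- `HT T`: the set of HT-models `⟨I,J⟩` (with `I ⊆ J`) of a theory `T`. -/
def HTmod (T : Set (Formula U)) : Set (Set U × Set U) :=
  {p | p.1 ⊆ p.2 ∧ SatHTTheory p.1 p.2 T}

/-- `AS T`: the equilibrium models (answer sets) of a theory `T`. -/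
def AS (T : Set (Formula U)) : Set (Set U) :=
  {I | SatHTTheory I I T ∧ ∀ J : Set U, J ⊂ I → ¬ SatHTTheory J I T}

/-- A ranked preference rule `φ₁ > ⋯ > φₖ ←ʲ ψ` with nonempty head and rank `j ≥ 1`. -/
structure Rule (U : Type) : Type where
  head : List (Formula U)
  body : Formula U
  rank : ℕ
  head_ne : head ≠ []
  rank_pos : 1 ≤ rank

/-- Satisfaction degree `v_I(r)`: the least (1-based) index of a satisfied head formula
if `I` satisfies the body and some head formula; `1` otherwise. -/
noncomputable def degree (I : Set U) (r : Rule U) : ℕ :=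
  if Sat I r.body ∧ ∃ φ ∈ r.head, Sat I φ then
    sInf {n : ℕ | ∃ k : Fin r.head.length, n = k.1 + 1 ∧ Sat I (r.head.get k)}
  else 1

/-- The strict preference `I >^S J` induced by a selector `S`. -/
def gtSel (S : Set (Rule U)) (I J : Set U) : Prop :=
  ∃ r' ∈ S, degree I r' < degree J r' ∧
    (∀ r ∈ S, r.rank = r'.rank → degree I r ≤ degree J r) ∧
    (∀ r ∈ S, r.rank < r'.rank → degree I r = degree J r)

/-- The indifference `I ≈^S J` induced by a selector `S`. -/
def simSel (S : Set (Rule U)) (I J : Set U) : Prop :=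
  ∀ r ∈ S, degree I r = degree J r

/-- The preference `I ≥^S J` induced by a selector `S`. -/
def geSel (S : Set (Rule U)) (I J : Set U) : Prop :=
  simSel S I J ∨ gtSel S I J

/-- An optimization problem: a generator theory plus a finite selector. -/
structure OptProblem (U : Type) : Type where
  gen : Set (Formula U)
  sel : Set (Rule U)
  sel_finite : sel.Finite

/-- Union of optimization problems. -/
def OptProblem.union (P Q : OptProblem U) : OptProblem U :=
  ⟨P.gen ∪ Q.gen, P.sel ∪ Q.sel, P.sel_finite.union Q.sel_finite⟩

/-- `P_{<i}`: the restriction of `P` to preference rules of rank `< i`. -/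
def OptProblem.below (P : OptProblem U) (i : ℕ) : OptProblem U :=
  ⟨P.gen, {r ∈ P.sel | r.rank < i}, P.sel_finite.subset (Set.sep_subset _ _)⟩

/-- The two semantics for generators: classical (CO problems) and
equilibrium-model/answer-set (ASO problems). -/
inductive Sem : Type where
  | co : Sem
  | aso : Sem

/-- `μ(P)`: the outcomes of `P` under the chosen semantics. -/
def outcomes (sem : Sem) (P : OptProblem U) : Set (Set U) :=
  match sem with
  | Sem.co => models P.gen
  | Sem.aso => AS P.gen

/-- `π(P)`: the preferred (optimal) outcomes of `P`. -/
def pref (sem : Sem) (P : OptProblem U) : Set (Set U) :=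
  {I | I ∈ outcomes sem P ∧ ¬ ∃ J ∈ outcomes sem P, gtSel P.sel J I}

/-- `diff^P(I,J)`: the largest `k` with `I ≈^{P_{<k}} J` (`∞` if this holds for all `k`). -/
noncomputable def diff (P : OptProblem U) (I J : Set U) : ℕ∞ :=
  if ∀ k : ℕ, simSel (P.below k).sel I J then ⊤
  else ((sSup {k : ℕ | simSel (P.below k).sel I J} : ℕ) : ℕ∞)

/-- Restriction `≻_V` of a relation on interpretations to a set `V` of interpretations. -/
def restrictRel (rel : Set U → Set U → Prop) (V : Set (Set U)) : Set U → Set U → Prop :=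
  fun A B => rel A B ∧ A ∈ V ∧ B ∈ V

/-- All rules of `S` have rank in the interval `[i,j]` (`j` may be `∞`). -/
def inRankInterval (i : ℕ) (j : ℕ∞) (S : Set (Rule U)) : Prop :=
  ∀ r ∈ S, i ≤ r.rank ∧ (r.rank : ℕ∞) ≤ j

/-- Strong sel-equivalence `P ≡^{s,[i,j]} Q`: same preferred outcomes under addition of any
context from `L^{s,[i,j]}` (empty generator, selector with ranks in `[i,j]`). -/
def seqv (sem : Sem) (i : ℕ) (j : ℕ∞) (P Q : OptProblem U) : Prop :=
  ∀ R : OptProblem U, R.gen = ∅ → inRankInterval i j R.sel →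
    pref sem (P.union R) = pref sem (Q.union R)

/-- Strong gen-equivalence `P ≡_g Q`: same preferred outcomes under addition of any
generator context from `L^g` (empty selector). -/
def geqv (sem : Sem) (P Q : OptProblem U) : Prop :=
  ∀ R : OptProblem U, R.sel = ∅ →
    pref sem (P.union R) = pref sem (Q.union R)

/-- Strong (combined) equivalence `P ≡^{s,[i,j]}_g Q`: same preferred outcomes under addition
of any context from `L^{[i,j]}` (arbitrary generator, selector with ranks in `[i,j]`). -/
def sgeqv (sem : Sem) (i : ℕ) (j : ℕ∞) (P Q : OptProblem U) : Prop :=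
  ∀ R : OptProblem U, inRankInterval i j R.sel →
    pref sem (P.union R) = pref sem (Q.union R)

/-- Corollary 10: for CO problems, `P ≡^s Q` implies `P ≡_g Q`. -/
def FTrue : Formula U := .imp .bot .bot

@[simp] lemma sat_FTrue (I : Set U) : Sat I (FTrue : Formula U) := fun h => h

def fnot (φ : Formula U) : Formula U := .imp φ .bot

lemma sat_fnot {I : Set U} {φ : Formula U} : Sat I (fnot φ) ↔ ¬ Sat I φ := Iff.rfl

def conjList : List (Formula U) → Formula U
  | [] => FTrue
  | φ :: l => .conj φ (conjList l)

lemma sat_conjList {I : Set U} : ∀ {l : List (Formula U)},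
    Sat I (conjList l) ↔ ∀ φ ∈ l, Sat I φ
  | [] => by simp [conjList]
  | φ :: l => by simp [conjList, Sat, sat_conjList (l := l)]

def disjList : List (Formula U) → Formula U
  | [] => .bot
  | φ :: l => .disj φ (disjList l)

lemma sat_disjList {I : Set U} : ∀ {l : List (Formula U)},
    Sat I (disjList l) ↔ ∃ φ ∈ l, Sat I φ
  | [] => by simp [disjList, Sat]
  | φ :: l => by simp [disjList, Sat, sat_disjList (l := l)]

/-- The condition under which `degree` is computed by `sInf`. -/
def Cond (I : Set U) (r : Rule U) : Prop := Sat I r.body ∧ ∃ φ ∈ r.head, Sat I φ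

lemma degree_spec {I : Set U} {r : Rule U} (hC : Cond I r) :
    (∃ k : Fin r.head.length, degree I r = k.1 + 1 ∧ Sat I (r.head.get k)) ∧
    ∀ k : Fin r.head.length, Sat I (r.head.get k) → degree I r ≤ k.1 + 1 := by
  have hne : {n : ℕ | ∃ k : Fin r.head.length, n = k.1 + 1 ∧ Sat I (r.head.get k)}.Nonempty := by
    obtain ⟨φ, hφ, hs⟩ := hC.2
    obtain ⟨k, hk⟩ := List.mem_iff_get.mp hφ
    exact ⟨k.1 + 1, k, rfl, hk ▸ hs⟩
  constructor
  · have := Nat.sInf_mem hne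
    rw [degree, if_pos (show Sat I r.body ∧ ∃ φ ∈ r.head, Sat I φ from hC)]
    exact this
  · intro k hk
    rw [degree, if_pos (show Sat I r.body ∧ ∃ φ ∈ r.head, Sat I φ from hC)]
    exact Nat.sInf_le ⟨k, rfl, hk⟩

lemma degree_of_not_cond {I : Set U} {r : Rule U} (hC : ¬ Cond I r) : degree I r = 1 := by
  rw [degree, if_neg (show ¬(Sat I r.body ∧ ∃ φ ∈ r.head, Sat I φ) from hC)]

lemma degree_pos (I : Set U) (r : Rule U) : 1 ≤ degree I r := by
  by_cases hC : Cond I r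
  · obtain ⟨⟨k, hk, _⟩, _⟩ := degree_spec hC
    omega
  · rw [degree_of_not_cond hC]

lemma degree_le_length (I : Set U) (r : Rule U) : degree I r ≤ r.head.length := by
  have hlen : 0 < r.head.length := List.length_pos_iff.mpr r.head_ne
  by_cases hC : Cond I r
  · obtain ⟨⟨k, hk, _⟩, _⟩ := degree_spec hC
    have := k.2
    omega
  · rw [degree_of_not_cond hC]; omega
/-- Formula expressing `t ≤ degree I r`. -/
def geF (r : Rule U) (t : ℕ) : Formula U :=
  if t ≤ 1 then FTrue
  else .conj r.body (.conj (disjList r.head)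
    (conjList ((List.range (t - 1)).map fun i => fnot (r.head.getD i .bot))))

lemma sat_geF {I : Set U} {r : Rule U} {t : ℕ} : Sat I (geF r t) ↔ t ≤ degree I r := by
  by_cases ht : t ≤ 1
  · rw [geF, if_pos ht]
    simpa using ht.trans (degree_pos I r)
  · rw [geF, if_neg ht]
    push_neg at ht
    constructor
    · rintro ⟨hb, hd, hneg⟩
      rw [sat_disjList] at hd
      have hC : Cond I r := ⟨hb, hd⟩
      obtain ⟨⟨k, hk, hsat⟩, _⟩ := degree_spec hC
      rw [sat_conjList] at hneg
      by_contra hlt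
      have hklt : k.1 < t - 1 := by omega
      have := hneg (fnot (r.head.getD k.1 .bot))
        (List.mem_map.mpr ⟨k.1, List.mem_range.mpr hklt, rfl⟩)
      rw [sat_fnot, List.getD_eq_getElem _ _ k.2] at this
      exact this (by simpa [List.get_eq_getElem] using hsat)
    · intro hle
      have hC : Cond I r := by
        by_contra hC
        have := degree_of_not_cond hC
        omega
      refine ⟨hC.1, sat_disjList.mpr hC.2, sat_conjList.mpr ?_⟩
      rintro φ hφ
      obtain ⟨i, hi, rfl⟩ := List.mem_map.mp hφ
      rw [List.mem_range] at hi
      rw [sat_fnot]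
      intro hsatD
      by_cases hilen : i < r.head.length
      · rw [List.getD_eq_getElem _ _ hilen] at hsatD
        have h5 : degree I r ≤ i + 1 :=
          (degree_spec hC).2 ⟨i, hilen⟩ (by simpa [List.get_eq_getElem] using hsatD)
        omega
      · rw [List.getD_eq_default _ _ (by omega)] at hsatD
        exact hsatD

/-- Formula expressing `degree I r = d`. -/
def eqF (r : Rule U) (d : ℕ) : Formula U := .conj (geF r d) (fnot (geF r (d + 1)))

lemma sat_eqF {I : Set U} {r : Rule U} {d : ℕ} : Sat I (eqF r d) ↔ degree I r = d := by
  show (Sat I (geF r d) ∧ Sat I (fnot (geF r (d+1)))) ↔ _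
  rw [sat_fnot, sat_geF, sat_geF]
  omega

/-- The mirror rule: same rank, degrees reversed. -/
def mirror (r : Rule U) : Rule U where
  head := (List.range r.head.length).map fun i => geF r (r.head.length - i)
  body := FTrue
  rank := r.rank
  head_ne := by
    have := List.length_pos_iff.mpr r.head_ne
    simp only [ne_eq, List.map_eq_nil_iff, List.range_eq_nil]
    omega
  rank_pos := r.rank_pos

@[simp] lemma mirror_rank (r : Rule U) : (mirror r).rank = r.rank := rfl

lemma mirror_head_length (r : Rule U) : (mirror r).head.length = r.head.length := by
  simp [mirror]

lemma degree_mirror (I : Set U) (r : Rule U) :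
    degree I (mirror r) = r.head.length + 1 - degree I r := by
  set n := r.head.length with hn
  set d := degree I r with hd
  have hd1 : 1 ≤ d := degree_pos I r
  have hdn : d ≤ n := degree_le_length I r
  have hlen : (mirror r).head.length = n := mirror_head_length r
  have hget : ∀ (k : Fin (mirror r).head.length), (mirror r).head.get k = geF r (n - k.1) := by
    intro k
    rw [List.get_eq_getElem]
    simp [mirror, hn]
  have hC : Cond I (mirror r) := by
    refine ⟨sat_FTrue I, ?_⟩
    refine ⟨(mirror r).head.get ⟨n - 1, by omega⟩, List.get_mem _ _, ?_⟩
    rw [hget, sat_geF]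
    show n - (n - 1) ≤ degree I r
    omega
  obtain ⟨⟨k, hk, hsat⟩, hmin⟩ := degree_spec hC
  rw [hget, sat_geF] at hsat
  have h2 : degree I (mirror r) ≤ (n - d) + 1 :=
    hmin ⟨n - d, by omega⟩ (by rw [hget, sat_geF]; show n - (n - d) ≤ d; omega)
  have hk2 : (k : ℕ) < n := lt_of_lt_of_eq k.2 hlen
  have hsat2 : n - (k : ℕ) ≤ d := hsat
  omega

/-- A rule with degree 1 on models of `χ` and 2 elsewhere. -/
def testRule (χ : Formula U) (m : ℕ) (hm : 1 ≤ m) : Rule U :=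
  ⟨[χ, fnot χ], FTrue, m, by simp, hm⟩

lemma degree_testRule {I : Set U} {χ : Formula U} {m : ℕ} {hm : 1 ≤ m} :
    degree I (testRule χ m hm) = if Sat I χ then 1 else 2 := by
  have hC : Cond I (testRule χ m hm) := by
    refine ⟨sat_FTrue I, ?_⟩
    by_cases hχ : Sat I χ
    · exact ⟨χ, by simp [testRule], hχ⟩
    · exact ⟨fnot χ, by simp [testRule], hχ⟩
  obtain ⟨⟨k, hk, hsat⟩, hmin⟩ := degree_spec hC
  by_cases hχ : Sat I χ
  · rw [if_pos hχ]
    have h1 : degree I (testRule χ m hm) ≤ 0 + 1 :=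
      hmin ⟨0, by simp [testRule]⟩ (by simpa [testRule] using hχ)
    have h2 := degree_pos I (testRule χ m hm)
    omega
  · rw [if_neg hχ]
    have hk2 : k.1 < 2 := by simpa [testRule] using k.2
    interval_cases h : k.1
    · exfalso
      apply hχ
      have : (testRule χ m hm).head.get k = χ := by
        rcases k with ⟨kv, hkv⟩
        simp only at h
        subst h
        simp [testRule]
      rwa [this] at hsat
    · omega
lemma mirror_le_iff {K J : Set U} {s : Rule U} :
    degree K (mirror s) ≤ degree J (mirror s) ↔ degree J s ≤ degree K s := by
  rw [degree_mirror, degree_mirror]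
  have h1 := degree_pos K s
  have h2 := degree_pos J s
  have h3 := degree_le_length K s
  have h4 := degree_le_length J s
  omega

lemma mirror_lt_iff {K J : Set U} {s : Rule U} :
    degree K (mirror s) < degree J (mirror s) ↔ degree J s < degree K s := by
  rw [degree_mirror, degree_mirror]
  have h1 := degree_pos K s
  have h2 := degree_pos J s
  have h3 := degree_le_length K s
  have h4 := degree_le_length J s
  omega

lemma mirror_eq_iff {K J : Set U} {s : Rule U} :
    degree K (mirror s) = degree J (mirror s) ↔ degree K s = degree J s := by
  rw [degree_mirror, degree_mirror]
  have h1 := degree_pos K s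
  have h2 := degree_pos J s
  have h3 := degree_le_length K s
  have h4 := degree_le_length J s
  omega

/-- No interpretation dominates another w.r.t. a fully "killed" selector. -/
lemma not_gtSel_kill {T : Set (Rule U)} (K J : Set U) :
    ¬ gtSel (T ∪ mirror '' T) K J := by
  rintro ⟨r', hr', hlt, hle, -⟩
  rcases hr' with hr' | ⟨s, hs, rfl⟩
  · have h1 := hle (mirror r') (Or.inr ⟨r', hr', rfl⟩) rfl
    rw [mirror_le_iff] at h1
    omega
  · have h1 := hle s (Or.inl hs) rfl
    rw [mirror_lt_iff] at hlt
    omega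

lemma models_union (T₁ T₂ : Set (Formula U)) :
    models (T₁ ∪ T₂) = models T₁ ∩ models T₂ := by
  ext I
  constructor
  · intro hI
    exact ⟨fun φ hφ => hI φ (Or.inl hφ), fun φ hφ => hI φ (Or.inr hφ)⟩
  · rintro ⟨h1, h2⟩ φ hφ
    rcases hφ with hφ | hφ
    · exact h1 φ hφ
    · exact h2 φ hφ

lemma outcomes_union_empty (P R : OptProblem U) (h : R.gen = ∅) :
    outcomes Sem.co (P.union R) = models P.gen := by
  simp [outcomes, OptProblem.union, h, models]

/-- Step A: strong sel-equivalence implies same models of the generators. -/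
lemma models_eq {P Q : OptProblem U} (h : seqv Sem.co 1 ⊤ P Q) :
    models P.gen = models Q.gen := by
  set T := P.sel ∪ Q.sel with hT
  have hfinT : T.Finite := P.sel_finite.union Q.sel_finite
  set R : OptProblem U := ⟨∅, T ∪ mirror '' T, hfinT.union (hfinT.image _)⟩ with hR
  have hrk : inRankInterval 1 ⊤ R.sel := by
    rintro r (hr | ⟨s, hs, rfl⟩)
    · exact ⟨r.rank_pos, le_top⟩
    · exact ⟨s.rank_pos, le_top⟩
  have hpref := h R rfl hrk
  have key : ∀ P' : OptProblem U, P'.sel ⊆ T →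
      pref Sem.co (P'.union R) = models P'.gen := by
    intro P' hsub
    have hsel : (P'.union R).sel = T ∪ mirror '' T := by
      show P'.sel ∪ (T ∪ mirror '' T) = T ∪ mirror '' T
      rw [Set.union_eq_self_of_subset_left (hsub.trans Set.subset_union_left)]
    ext I
    simp only [pref, Set.mem_setOf_eq, outcomes_union_empty P' R rfl, hsel]
    refine ⟨fun hI => hI.1, fun hI => ⟨hI, ?_⟩⟩
    rintro ⟨J, -, hgt⟩
    exact not_gtSel_kill J I hgt
  rw [← key P Set.subset_union_left, ← key Q Set.subset_union_right, hpref]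
/-- Step B: strong sel-equivalence transfers strict preference between outcomes. -/
lemma gt_transfer {P Q : OptProblem U} (h : seqv Sem.co 1 ⊤ P Q) {I J : Set U}
    (hI : I ∈ models P.gen) (hJ : J ∈ models P.gen)
    (hPIJ : gtSel P.sel I J) : gtSel Q.sel I J := by
  by_contra hQn
  have hMeq := models_eq h
  obtain ⟨r₀, hr₀P, hlt₀, hle₀, heq₀⟩ := hPIJ
  set ℓ := r₀.rank with hℓ
  by_cases hqd : ∃ s ∈ Q.sel, s.rank ≤ ℓ ∧ degree I s ≠ degree J s
  case neg =>
    push_neg at hqd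
    set E := Q.sel ∪ mirror '' Q.sel with hE
    set R₁ : OptProblem U :=
      ⟨∅, E, Q.sel_finite.union (Q.sel_finite.image _)⟩ with hR₁
    have hrk : inRankInterval 1 ⊤ R₁.sel := by
      rintro r (hr | ⟨s, hs, rfl⟩)
      · exact ⟨r.rank_pos, le_top⟩
      · exact ⟨s.rank_pos, le_top⟩
    have hpref := h R₁ rfl hrk
    have hJQ : J ∈ pref Sem.co (Q.union R₁) := by
      refine ⟨by rw [outcomes_union_empty Q R₁ rfl, ← hMeq]; exact hJ, ?_⟩
      rintro ⟨K, -, hgt⟩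
      have hsel : (Q.union R₁).sel = Q.sel ∪ mirror '' Q.sel := by
        show Q.sel ∪ (Q.sel ∪ mirror '' Q.sel) = _
        rw [← Set.union_assoc, Set.union_self]
      rw [hsel] at hgt
      exact not_gtSel_kill K J hgt
    rw [← hpref] at hJQ
    apply hJQ.2
    refine ⟨I, by rw [outcomes_union_empty P R₁ rfl]; exact hI, r₀, Or.inl hr₀P, hlt₀, ?_, ?_⟩
    · rintro r (hr | hr | ⟨s, hs, rfl⟩) hrk
      · exact hle₀ r hr hrk
      · exact le_of_eq (hqd r hr (le_of_eq hrk))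
      · rw [mirror_le_iff]
        exact le_of_eq (hqd s hs (le_of_eq hrk)).symm
    · rintro r (hr | hr | ⟨s, hs, rfl⟩) hrk
      · exact heq₀ r hr hrk
      · exact hqd r hr (le_of_lt hrk)
      · rw [mirror_eq_iff]
        exact hqd s hs (le_of_lt hrk)
  case pos =>
    set D := {n : ℕ | ∃ s ∈ Q.sel, s.rank = n ∧ degree I s ≠ degree J s} with hD
    have hDne : D.Nonempty := by
      obtain ⟨s, hs, -, hne⟩ := hqd
      exact ⟨s.rank, s, hs, rfl, hne⟩
    set m := sInf D with hm
    obtain ⟨sm, hsmQ, hsmrank, hsmdiff⟩ := Nat.sInf_mem hDne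
    have hmle : m ≤ ℓ := by
      obtain ⟨s, hs, hsle, hne⟩ := hqd
      exact le_trans (Nat.sInf_le ⟨s, hs, rfl, hne⟩) hsle
    have hbelow : ∀ s ∈ Q.sel, s.rank < m → degree I s = degree J s := by
      intro s hs hlt
      by_contra hne
      have : m ≤ s.rank := Nat.sInf_le (show s.rank ∈ D from ⟨s, hs, rfl, hne⟩)
      omega
    by_cases hall : ∀ s ∈ Q.sel, s.rank = m → degree I s ≤ degree J s
    · exact hQn ⟨sm, hsmQ,
        lt_of_le_of_ne (hall sm hsmQ hsmrank) hsmdiff,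
        fun r hr hrk => hall r hr (hrk.trans hsmrank),
        fun r hr hrk => hbelow r hr (by omega)⟩
    · push_neg at hall
      obtain ⟨rs, hrsQ, hrsrank, hrslt⟩ := hall
      have hm1 : 1 ≤ m := le_trans sm.rank_pos (le_of_eq hsmrank)
      set A := {a ∈ Q.sel | a.rank = m ∧ degree I a < degree J a} with hA
      have hAfin : A.Finite := Q.sel_finite.subset (Set.sep_subset _ _)
      set dJ := degree J rs with hdJ
      set χ : Formula U := Formula.disj (fnot (eqF rs dJ))
        (conjList (hAfin.toFinset.toList.map fun a => eqF a (degree J a))) with hχ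
      have satχ : ∀ K : Set U,
          Sat K χ ↔ (degree K rs ≠ dJ ∨ ∀ a ∈ A, degree K a = degree J a) := by
        intro K
        show (Sat K (fnot (eqF rs dJ)) ∨ Sat K (conjList _)) ↔ _
        rw [sat_fnot, sat_eqF, sat_conjList]
        constructor
        · rintro (h1 | h1)
          · exact Or.inl h1
          · refine Or.inr fun a ha => ?_
            have := h1 (eqF a (degree J a))
              (List.mem_map.mpr ⟨a, by rw [Finset.mem_toList, Set.Finite.mem_toFinset]; exact ha, rfl⟩)
            rwa [sat_eqF] at this
        · rintro (h1 | h1)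
          · exact Or.inl h1
          · refine Or.inr ?_
            rintro φ hφ
            obtain ⟨a, ha, rfl⟩ := List.mem_map.mp hφ
            rw [Finset.mem_toList, Set.Finite.mem_toFinset] at ha
            rw [sat_eqF]
            exact h1 a ha
      set u := testRule χ m hm1 with hu
      have hrsnA : rs ∉ A := by
        rintro ⟨-, -, hlt⟩
        omega
      have hJu : degree J u = 1 := by
        rw [hu, degree_testRule, if_pos ((satχ J).mpr (Or.inr fun a _ => rfl))]
      have hIu : degree I u = 1 := by
        rw [hu, degree_testRule, if_pos ((satχ I).mpr (Or.inl (by omega)))]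
      set E := mirror '' (Q.sel \ A) ∪ {u} with hE
      set R₂ : OptProblem U :=
        ⟨∅, E, ((Q.sel_finite.subset Set.diff_subset).image _).union (Set.finite_singleton u)⟩ with hR₂
      have hrk : inRankInterval 1 ⊤ R₂.sel := by
        rintro r (⟨s, hs, rfl⟩ | hr)
        · exact ⟨s.rank_pos, le_top⟩
        · rw [Set.mem_singleton_iff] at hr
          subst hr
          exact ⟨hm1, le_top⟩
      have hpref := h R₂ rfl hrk
      -- J is preferred in Q ∪ R₂
      have hJQ : J ∈ pref Sem.co (Q.union R₂) := by
        refine ⟨by rw [outcomes_union_empty Q R₂ rfl, ← hMeq]; exact hJ, ?_⟩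
        rintro ⟨K, -, r', hr', hlt, hle, heq⟩
        have hselQ : (Q.union R₂).sel = Q.sel ∪ (mirror '' (Q.sel \ A) ∪ {u}) := rfl
        rw [hselQ] at hr' hle heq
        rcases hr' with hr' | ⟨s, hs, rfl⟩ | hr'
        · by_cases hA' : r' ∈ A
          · -- r' ∈ A, rank m
            have hrank' : r'.rank = m := hA'.2.1
            have h1 : degree K rs ≤ degree J rs :=
              hle rs (Or.inl hrsQ) (by rw [hrsrank, hrank'])
            have h2 : degree K (mirror rs) ≤ degree J (mirror rs) :=
              hle (mirror rs) (Or.inr (Or.inl ⟨rs, ⟨hrsQ, hrsnA⟩, rfl⟩)) (by rw [mirror_rank, hrsrank, hrank'])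
            rw [mirror_le_iff] at h2
            have h3 : degree K u ≤ degree J u :=
              hle u (Or.inr (Or.inr rfl)) (by rw [hu]; show m = r'.rank; omega)
            rw [hJu] at h3
            have hKu : degree K u = 1 := le_antisymm h3 (degree_pos K u)
            have hKχ : Sat K χ := by
              by_contra hKχ
              rw [hu, degree_testRule, if_neg hKχ] at hKu
              omega
            rcases (satχ K).mp hKχ with hc | hc
            · omega
            · have := hc r' hA'
              omega
          · -- r' ∈ Q.sel \ A : blocked by its mirror
            have h1 : degree K (mirror r') ≤ degree J (mirror r') :=
              hle (mirror r') (Or.inr (Or.inl ⟨r', ⟨hr', hA'⟩, rfl⟩)) rfl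
            rw [mirror_le_iff] at h1
            omega
        · -- r' = mirror s
          have h1 : degree K s ≤ degree J s := hle s (Or.inl hs.1) rfl
          rw [mirror_lt_iff] at hlt
          omega
        · -- r' = u
          rw [Set.mem_singleton_iff] at hr'
          subst hr'
          rw [hJu] at hlt
          have := degree_pos K u
          omega
      rw [← hpref] at hJQ
      apply hJQ.2
      -- I dominates J in P ∪ R₂ via mirror rs
      refine ⟨I, by rw [outcomes_union_empty P R₂ rfl]; exact hI,
        mirror rs, Or.inr (Or.inl ⟨rs, ⟨hrsQ, hrsnA⟩, rfl⟩), by rw [mirror_lt_iff]; omega, ?_, ?_⟩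
      · rintro r (hr | ⟨s, hs, rfl⟩ | hr) hrk
        · -- r ∈ P.sel at rank m
          rw [mirror_rank, hrsrank] at hrk
          rcases lt_or_eq_of_le hmle with hc | hc
          · exact le_of_eq (heq₀ r hr (by omega))
          · exact hle₀ r hr (by omega)
        · -- mirrored rule of Q.sel \ A at rank m
          rw [mirror_le_iff]
          rw [mirror_rank, mirror_rank, hrsrank] at hrk
          by_contra hcon
          push_neg at hcon
          exact hs.2 ⟨hs.1, hrk, hcon⟩
        · rw [Set.mem_singleton_iff] at hr
          subst hr
          rw [hIu, hJu]
      · rintro r (hr | ⟨s, hs, rfl⟩ | hr) hrk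
        · rw [mirror_rank, hrsrank] at hrk
          exact heq₀ r hr (by omega)
        · rw [mirror_rank, mirror_rank, hrsrank] at hrk
          rw [mirror_eq_iff]
          exact hbelow s hs.1 hrk
        · rw [Set.mem_singleton_iff] at hr
          subst hr
          rw [mirror_rank, hrsrank] at hrk
          rw [hu] at hrk
          exact absurd hrk (by show ¬ m < m; omega)
theorem stmt10 {U : Type} [Countable U] (P Q : OptProblem U)
    (h : seqv Sem.co 1 ⊤ P Q) : geqv Sem.co P Q := by
  intro R hRsel
  have hMeq := models_eq h
  have hsymm : seqv Sem.co 1 ⊤ Q P := fun R' h1 h2 => (h R' h1 h2).symm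
  have hselP : (P.union R).sel = P.sel := by
    show P.sel ∪ R.sel = P.sel
    rw [hRsel, Set.union_empty]
  have hselQ : (Q.union R).sel = Q.sel := by
    show Q.sel ∪ R.sel = Q.sel
    rw [hRsel, Set.union_empty]
  have houtP : outcomes Sem.co (P.union R) = models P.gen ∩ models R.gen := by
    show models (P.gen ∪ R.gen) = _
    rw [models_union]
  have houtQ : outcomes Sem.co (Q.union R) = models P.gen ∩ models R.gen := by
    show models (Q.gen ∪ R.gen) = _
    rw [models_union, hMeq]
  ext I
  simp only [pref, Set.mem_setOf_eq, houtP, houtQ, hselP, hselQ]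
  constructor
  · rintro ⟨hIo, hIn⟩
    refine ⟨hIo, ?_⟩
    rintro ⟨J, hJo, hgt⟩
    exact hIn ⟨J, hJo, gt_transfer hsymm (hMeq ▸ hJo.1) (hMeq ▸ hIo.1) hgt⟩
  · rintro ⟨hIo, hIn⟩
    refine ⟨hIo, ?_⟩
    rintro ⟨J, hJo, hgt⟩
    exact hIn ⟨J, hJo, gt_transfer h hJo.1 hIo.1 hgt⟩
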